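/- (Bound on m(λ) near the real axis) Suppose for nonreal λ = μ+iν, the value l lies on the circle C_b, so that ∫_0^b |θ+lφ|² d_q x ≤ |l|/|ν|. Then |l| ≤ (|ν| ∫_0^b |φ|² d_q x)^{-1} + { 2∫_0^b|θ|² d_q x / ∫_0^b|φ|² d_q x + (|ν| ∫_0^b |φ|² d_q x)^{-2} }^{1/2}. In particular, for fixed b with ∫_0^b|φ|²d_q x > 0, l = O(1/|ν|) as ν → 0. -/

import Mathlib

/-- Real-valued Jackson integral on `[0,b]`. -/
noncomputable def jackson0bR (q : ℝ) (g : ℝ → ℝ) (b : ℝ) : ℝ :=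
  (1 - q) * ∑' n : ℕ, q ^ n * b * g (b * q ^ n)

/-- Bound on points of the circle `C_b`: if `∫_0^b |θ+lφ|² d_q x ≤ |l|/|ν|`, then
`|l| ≤ (|ν| ∫_0^b |φ|²)⁻¹ + √( 2∫_0^b|θ|² / ∫_0^b|φ|² + (|ν| ∫_0^b |φ|²)⁻² )`. -/
theorem stmt14 (q : ℝ) (hq0 : 0 < q) (hq1 : q < 1) (nu : ℝ) (hnu : nu ≠ 0)
    (theta phi : ℝ → ℂ) (l : ℂ) (k : ℤ) (b : ℝ) (hb : b = q ^ k)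
    (hSphi : Summable (fun n : ℕ => q ^ n * b * ‖phi (b * q ^ n)‖ ^ 2))
    (hStheta : Summable (fun n : ℕ => q ^ n * b * ‖theta (b * q ^ n)‖ ^ 2))
    (hSc : Summable (fun n : ℕ =>
      q ^ n * b * ‖theta (b * q ^ n) + l * phi (b * q ^ n)‖ ^ 2))
    (hIphi : 0 < jackson0bR q (fun x => ‖phi x‖ ^ 2) b)
    (h1 : jackson0bR q (fun x => ‖theta x + l * phi x‖ ^ 2) b
      ≤ ‖l‖ / |nu|) :
    ‖l‖
      ≤ (|nu| * jackson0bR q (fun x => ‖phi x‖ ^ 2) b)⁻¹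
        + Real.sqrt (2 * jackson0bR q (fun x => ‖theta x‖ ^ 2) b
              / jackson0bR q (fun x => ‖phi x‖ ^ 2) b
            + ((|nu| * jackson0bR q (fun x => ‖phi x‖ ^ 2) b)⁻¹) ^ 2) := by
  set P := jackson0bR q (fun x => ‖phi x‖ ^ 2) b with hP
  set T := jackson0bR q (fun x => ‖theta x‖ ^ 2) b with hT
  set S := jackson0bR q (fun x => ‖theta x + l * phi x‖ ^ 2) b with hS
  set L := ‖l‖ with hL
  have hb0 : 0 < b := hb ▸ zpow_pos hq0 k
  have h1q : 0 < 1 - q := by linarith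
  have hnu0 : 0 < |nu| := abs_pos.mpr hnu
  -- key integral inequality
  have hpt : ∀ n : ℕ, L ^ 2 / 2 * (q ^ n * b * ‖phi (b * q ^ n)‖ ^ 2)
      ≤ q ^ n * b * ‖theta (b * q ^ n)‖ ^ 2
        + q ^ n * b * ‖theta (b * q ^ n) + l * phi (b * q ^ n)‖ ^ 2 := by
    intro n
    have hw : (0:ℝ) ≤ q ^ n * b := by positivity
    set x := b * q ^ n
    have htri : ‖l * phi x‖ ≤
        ‖theta x + l * phi x‖ + ‖theta x‖ := by
      have := norm_sub_le (theta x + l * phi x) (theta x)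
      simpa using this
    have hmul : ‖l * phi x‖ = L * ‖phi x‖ := norm_mul _ _
    rw [hmul] at htri
    have h0a : (0:ℝ) ≤ ‖theta x + l * phi x‖ := norm_nonneg _
    have h0b : (0:ℝ) ≤ ‖theta x‖ := norm_nonneg _
    have h0c : (0:ℝ) ≤ L * ‖phi x‖ := by
      rw [← hmul]; exact norm_nonneg _
    have hsq : L ^ 2 / 2 * ‖phi x‖ ^ 2 ≤
        ‖theta x‖ ^ 2 + ‖theta x + l * phi x‖ ^ 2 := by
      nlinarith [sq_nonneg (‖theta x + l * phi x‖ - ‖theta x‖),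
        mul_self_le_mul_self h0c htri]
    calc L ^ 2 / 2 * (q ^ n * b * ‖phi x‖ ^ 2)
        = q ^ n * b * (L ^ 2 / 2 * ‖phi x‖ ^ 2) := by ring
      _ ≤ q ^ n * b * (‖theta x‖ ^ 2
            + ‖theta x + l * phi x‖ ^ 2) :=
          mul_le_mul_of_nonneg_left hsq hw
      _ = q ^ n * b * ‖theta x‖ ^ 2
            + q ^ n * b * ‖theta x + l * phi x‖ ^ 2 := by ring
  have key : L ^ 2 / 2 * P ≤ T + S := by
    have hsum := Summable.tsum_le_tsum hpt (hSphi.mul_left (L ^ 2 / 2)) (hStheta.add hSc)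
    rw [tsum_mul_left, Summable.tsum_add hStheta hSc] at hsum
    simp only [hP, hT, hS, jackson0bR]
    nlinarith [hsum]
  have hmain : L ^ 2 / 2 * P ≤ T + L / |nu| := key.trans (by linarith)
  set c := (|nu| * P)⁻¹ with hc
  have hc0 : 0 < c := by positivity
  have hquad : (L - c) ^ 2 ≤ 2 * T / P + c ^ 2 := by
    have hPc : |nu| * P * c = 1 := by
      rw [hc]; field_simp
    have hL2 : L ^ 2 ≤ 2 * T / P + 2 * c * L := by
      have h2 : L ^ 2 * P ≤ 2 * T + 2 * (L / |nu|) := by nlinarith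
      have h3 : L / |nu| = c * L * P := by
        field_simp [hc]
        linear_combination (-L) * hPc
      rw [h3] at h2
      have hTP : 2 * T / P * P = 2 * T := by field_simp
      nlinarith [h2, hTP, hIphi]
    nlinarith
  have hfin : L - c ≤ Real.sqrt (2 * T / P + c ^ 2) := by
    rcases le_or_gt (L - c) 0 with h | h
    · exact h.trans (Real.sqrt_nonneg _)
    · calc L - c = Real.sqrt ((L - c) ^ 2) := (Real.sqrt_sq h.le).symm
        _ ≤ Real.sqrt (2 * T / P + c ^ 2) := Real.sqrt_le_sqrt hquad
  linarith
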